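/- For every integer length bound k ≥ 3 and every non-uniform length function λ, there exists a (not necessarily computationally efficient) truthful (k,λ)-BE mechanism that admits approximation ratio ρ(λ) (witnessed by the iterative-optimal mechanism IO). -/

import Mathlib

/-!
Barter exchange (BE) framework, following Emek–Shpiro,
"Barter Exchange with Bounded Trading Cycles".
-/

open Finset

namespace BarterExchange

noncomputable section

/-- The length of the trading cycle of `π` containing agent `i`
(equals `0` when `i` does not partake in `π`). -/
def cycLen {n : ℕ} (π : Equiv.Perm (Fin n)) (i : Fin n) : ℕ :=
  (π.cycleOf i).support.card

/-- The utility of agent `i` from the exchange `π` under the length function `lam`: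
`lam ℓ` if `i` partakes in a trading cycle of length `ℓ`, and `0` otherwise. -/
def utility {n : ℕ} (lam : ℕ → ℝ) (π : Equiv.Perm (Fin n)) (i : Fin n) : ℝ :=
  if π i ≠ i then lam (cycLen π i) else 0

/-- Social welfare of an exchange: the sum of the agents' utilities,
which equals `∑_{trading cycles c} len(c)·λ(len(c))`. -/
def SW {n : ℕ} (lam : ℕ → ℝ) (π : Equiv.Perm (Fin n)) : ℝ :=
  ∑ i, utility lam π i

/-- A wish list vector: `W i ⊆ [n] ∖ {i}`. -/
def IsWishList {n : ℕ} (W : Fin n → Finset (Fin n)) : Prop :=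
  ∀ i, i ∉ W i

/-- `π ∈ Π_W^k`: every partaking agent is sent to an agent on her wish list and
all trading cycles have length at most `k`. -/
def Feasible (k : ℕ) {n : ℕ} (W : Fin n → Finset (Fin n)) (π : Equiv.Perm (Fin n)) : Prop :=
  ∀ i : Fin n, π i ≠ i → π i ∈ W i ∧ cycLen π i ≤ k

/-- A length function for length bound `k`: a non-increasing map `{2,…,k} → (0,1]`. -/
def IsLengthFunction (k : ℕ) (lam : ℕ → ℝ) : Prop :=
  (∀ ℓ : ℕ, 2 ≤ ℓ → ℓ ≤ k → 0 < lam ℓ ∧ lam ℓ ≤ 1) ∧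
    ∀ ℓ ℓ' : ℕ, 2 ≤ ℓ → ℓ ≤ ℓ' → ℓ' ≤ k → lam ℓ' ≤ lam ℓ

/-- A mechanism assigns an exchange to every number of agents and wish list vector. -/
abbrev Mechanism : Type :=
  (n : ℕ) → (Fin n → Finset (Fin n)) → Equiv.Perm (Fin n)

/-- A `(k,λ)`-BE mechanism outputs, on every wish list vector `W`,
an exchange in `Π_W^k` (individual rationality). -/
def IsMechanism (k : ℕ) (f : Mechanism) : Prop :=
  ∀ (n : ℕ) (W : Fin n → Finset (Fin n)), IsWishList W → Feasible k W (f n W)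

/-- Truthfulness: under the subset wish list assumption, no agent can gain by
reporting a strict subset of her true wish list. -/
def Truthful (k : ℕ) (lam : ℕ → ℝ) (f : Mechanism) : Prop :=
  ∀ (n : ℕ) (Wstar W : Fin n → Finset (Fin n)), IsWishList Wstar →
    (∀ j, W j ⊆ Wstar j) → ∀ i : Fin n,
      utility lam (f n W) i ≤ utility lam (f n (Function.update W i (Wstar i))) i

/-- `f` admits approximation ratio `r ≥ 1`: on every wish list vector the social welfare of
`f`'s outcome is at least `1/r` times that of any feasible exchange. -/
def ApproxRatio (k : ℕ) (lam : ℕ → ℝ) (f : Mechanism) (r : ℝ) : Prop :=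
  1 ≤ r ∧
    ∀ (n : ℕ) (Wstar : Fin n → Finset (Fin n)), IsWishList Wstar →
      ∀ π : Equiv.Perm (Fin n), Feasible k Wstar π →
        SW lam (f n Wstar) ≥ (1 / r) * SW lam π

/-- A length function is non-uniform if it strictly decreases somewhere on `{2,…,k}`. -/
def NonUniform (k : ℕ) (lam : ℕ → ℝ) : Prop :=
  ∃ ℓ ℓ' : ℕ, 2 ≤ ℓ ∧ ℓ < ℓ' ∧ ℓ' ≤ k ∧ lam ℓ' < lam ℓ

/-- The critical ratio `ρ(λ)`: the maximum, over all pairs `2 ≤ ℓ < ℓ′ ≤ k` with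
`λ(ℓ) > λ(ℓ′)`, of `max{ ℓ′·λ(ℓ′)/λ(ℓ), ((ℓ−1)/ℓ)·(ℓ′·λ(ℓ′)/λ(ℓ)) + 1 }`. -/
def rho (k : ℕ) (lam : ℕ → ℝ) : ℝ :=
  sSup {x : ℝ |
    ∃ ℓ ℓ' : ℕ, 2 ≤ ℓ ∧ ℓ < ℓ' ∧ ℓ' ≤ k ∧ lam ℓ' < lam ℓ ∧
      x = max ((ℓ' : ℝ) * lam ℓ' / lam ℓ)
              (((ℓ : ℝ) - 1) / (ℓ : ℝ) * ((ℓ' : ℝ) * lam ℓ' / lam ℓ) + 1)}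


/-! ### The iterative-optimal (IO) mechanism and its analysis -/

section IOMechanism

open Equiv Equiv.Perm

variable {n : ℕ}

lemma mul_apply_left {σ π : Perm (Fin n)} (h : σ.Disjoint π) {i : Fin n}
    (hi : i ∈ σ.support) : (σ * π) i = σ i := by
  have : π i = i := by
    have := (Equiv.Perm.disjoint_iff_disjoint_support.mp h)
    by_contra hc
    exact (Finset.disjoint_left.mp this hi) (Equiv.Perm.mem_support.mpr hc)
  simp [Equiv.Perm.mul_apply, this]

lemma mul_apply_right {σ π : Perm (Fin n)} (h : σ.Disjoint π) {i : Fin n}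
    (hi : i ∈ π.support) : (σ * π) i = π i := by
  have hπ : π i ∈ π.support := Equiv.Perm.apply_mem_support.mpr hi
  have : σ (π i) = π i := by
    by_contra hc
    exact (Finset.disjoint_left.mp (Equiv.Perm.disjoint_iff_disjoint_support.mp h)
      (Equiv.Perm.mem_support.mpr hc)) hπ
  simp [Equiv.Perm.mul_apply, this]

lemma cycLen_mul_left {σ π : Perm (Fin n)} (h : σ.Disjoint π) {i : Fin n}
    (hi : i ∈ σ.support) : cycLen (σ * π) i = cycLen σ i := by
  have hπ : π.cycleOf i = 1 := by
    rw [Equiv.Perm.cycleOf_eq_one_iff]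
    by_contra hc
    exact (Finset.disjoint_left.mp (Equiv.Perm.disjoint_iff_disjoint_support.mp h) hi)
      (Equiv.Perm.mem_support.mpr hc)
  unfold cycLen
  rw [h.cycleOf_mul_distrib, hπ, mul_one]

lemma cycLen_mul_right {σ π : Perm (Fin n)} (h : σ.Disjoint π) {i : Fin n}
    (hi : i ∈ π.support) : cycLen (σ * π) i = cycLen π i := by
  have hσ : σ.cycleOf i = 1 := by
    rw [Equiv.Perm.cycleOf_eq_one_iff]
    by_contra hc
    exact (Finset.disjoint_left.mp (Equiv.Perm.disjoint_iff_disjoint_support.mp h)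
      (Equiv.Perm.mem_support.mpr hc)) hi
  unfold cycLen
  rw [h.cycleOf_mul_distrib, hσ, one_mul]


noncomputable def permLO (n : ℕ) : LinearOrder (Perm (Fin n)) :=
  LinearOrder.lift' (Fintype.equivFin (Perm (Fin n))) (Equiv.injective _)

noncomputable def argmaxSet (s : Finset (Perm (Fin n))) : Finset (Perm (Fin n)) :=
  s.filter (fun π => ∀ τ ∈ s, τ.support.card ≤ π.support.card)

lemma argmaxSet_nonempty {s : Finset (Perm (Fin n))} (h : s.Nonempty) :
    (argmaxSet s).Nonempty := by
  obtain ⟨b, hb, hmax⟩ := Finset.exists_max_image s (fun π => π.support.card) h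
  exact ⟨b, Finset.mem_filter.mpr ⟨hb, hmax⟩⟩

noncomputable def pick (s : Finset (Perm (Fin n))) : Perm (Fin n) :=
  if h : s.Nonempty then
    @Finset.min' _ (permLO n) (argmaxSet s) (argmaxSet_nonempty h)
  else 1

lemma pick_mem {s : Finset (Perm (Fin n))} (h : s.Nonempty) : pick s ∈ s := by
  rw [pick, dif_pos h]
  have := @Finset.min'_mem _ (permLO n) (argmaxSet s) (argmaxSet_nonempty h)
  exact (Finset.mem_filter.mp this).1

lemma pick_max {s : Finset (Perm (Fin n))} {τ : Perm (Fin n)} (hτ : τ ∈ s) :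
    τ.support.card ≤ (pick s).support.card := by
  have h : s.Nonempty := ⟨τ, hτ⟩
  rw [pick, dif_pos h]
  have := @Finset.min'_mem _ (permLO n) (argmaxSet s) (argmaxSet_nonempty h)
  exact (Finset.mem_filter.mp this).2 τ hτ

lemma pick_eq_of_subset {s t : Finset (Perm (Fin n))} (hst : s ⊆ t) (h : pick t ∈ s) :
    pick s = pick t := by
  have hs : s.Nonempty := ⟨_, h⟩
  have ht : t.Nonempty := hs.mono hst
  have hpts : pick t ∈ argmaxSet s :=
    Finset.mem_filter.mpr ⟨h, fun τ hτ => pick_max (hst hτ)⟩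
  have hsub : argmaxSet s ⊆ argmaxSet t := by
    intro π hπ
    obtain ⟨hπs, hπmax⟩ := Finset.mem_filter.mp hπ
    refine Finset.mem_filter.mpr ⟨hst hπs, fun τ hτ => ?_⟩
    calc τ.support.card ≤ (pick t).support.card := pick_max hτ
      _ ≤ π.support.card := hπmax _ h
  letI := permLO n
  rw [pick, dif_pos hs, pick, dif_pos ht]
  refine le_antisymm ?_ ?_
  · exact Finset.min'_le _ _ (by rw [pick, dif_pos ht] at hpts; exact hpts)
  · refine Finset.le_min' _ _ _ (fun y hy => ?_)
    exact Finset.min'_le _ _ (hsub hy)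

/-- Product of a finset of pairwise disjoint permutations. -/
noncomputable def dProd (s : Finset (Perm (Fin n)))
    (hd : (s : Set (Perm (Fin n))).Pairwise Equiv.Perm.Disjoint) : Perm (Fin n) :=
  s.noncommProd id (hd.mono' fun _ _ => Equiv.Perm.Disjoint.commute)

lemma pairwise_subset {s t : Finset (Perm (Fin n))} (hst : s ⊆ t)
    (hd : (t : Set (Perm (Fin n))).Pairwise Equiv.Perm.Disjoint) :
    (s : Set (Perm (Fin n))).Pairwise Equiv.Perm.Disjoint :=
  hd.mono (Finset.coe_subset.mpr hst)

lemma dProd_insert {a : Perm (Fin n)} {s : Finset (Perm (Fin n))} (ha : a ∉ s)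
    (hd : ((insert a s : Finset (Perm (Fin n))) : Set (Perm (Fin n))).Pairwise
      Equiv.Perm.Disjoint) :
    dProd (insert a s) hd
      = a * dProd s (pairwise_subset (Finset.subset_insert a s) hd) := by
  rw [dProd, Finset.noncommProd_insert_of_notMem _ _ _ _ ha]
  rfl

lemma disjoint_dProd {f : Perm (Fin n)} (s : Finset (Perm (Fin n)))
    (hd : (s : Set (Perm (Fin n))).Pairwise Equiv.Perm.Disjoint)
    (hf : ∀ c ∈ s, f.Disjoint c) : f.Disjoint (dProd s hd) := by
  classical
  induction s using Finset.induction_on with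
  | empty =>
    have : dProd (∅ : Finset (Perm (Fin n))) hd = 1 := by
      rw [dProd, Finset.noncommProd_empty]
    rw [this]
    exact Equiv.Perm.disjoint_one_right f
  | @insert a s ha ih =>
    rw [dProd_insert ha]
    have h1 : f.Disjoint a := hf a (Finset.mem_insert_self _ _)
    have h2 : f.Disjoint (dProd s _) :=
      ih (pairwise_subset (Finset.subset_insert a s) hd)
        (fun c hc => hf c (Finset.mem_insert_of_mem hc))
    exact h1.mul_right h2

lemma a_disjoint_dProd {a : Perm (Fin n)} {s : Finset (Perm (Fin n))} (ha : a ∉ s)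
    (hd : ((insert a s : Finset (Perm (Fin n))) : Set (Perm (Fin n))).Pairwise
      Equiv.Perm.Disjoint) :
    a.Disjoint (dProd s (pairwise_subset (Finset.subset_insert a s) hd)) := by
  refine disjoint_dProd s _ (fun c hc => ?_)
  exact hd (Finset.mem_insert_self a s) (by simp [hc]) (by rintro rfl; exact ha hc)

lemma support_dProd (s : Finset (Perm (Fin n)))
    (hd : (s : Set (Perm (Fin n))).Pairwise Equiv.Perm.Disjoint) :
    (dProd s hd).support = s.biUnion Equiv.Perm.support := by
  classical
  induction s using Finset.induction_on with
  | empty =>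
    have : dProd (∅ : Finset (Perm (Fin n))) hd = 1 := by
      rw [dProd, Finset.noncommProd_empty]
    simp [this]
  | @insert a s ha ih =>
    rw [dProd_insert ha, (a_disjoint_dProd ha hd).support_mul,
      ih (pairwise_subset (Finset.subset_insert a s) hd), Finset.biUnion_insert]

lemma dProd_apply_mem {s : Finset (Perm (Fin n))}
    {hd : (s : Set (Perm (Fin n))).Pairwise Equiv.Perm.Disjoint}
    {c : Perm (Fin n)} (hc : c ∈ s) {i : Fin n} (hi : i ∈ c.support) :
    dProd s hd i = c i := by
  classical
  induction s using Finset.induction_on with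
  | empty => simp at hc
  | @insert a s ha ih =>
    rw [dProd_insert ha]
    rcases Finset.mem_insert.mp hc with rfl | hcs
    · exact mul_apply_left (a_disjoint_dProd ha hd) hi
    · have hsup : i ∈ (dProd s (pairwise_subset (Finset.subset_insert a s) hd)).support := by
        rw [support_dProd]; exact Finset.mem_biUnion.mpr ⟨c, hcs, hi⟩
      rw [mul_apply_right (a_disjoint_dProd ha hd) hsup]
      exact ih hcs

lemma cycleFactors_dProd (s : Finset (Perm (Fin n)))
    (hd : (s : Set (Perm (Fin n))).Pairwise Equiv.Perm.Disjoint)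
    (hc : ∀ c ∈ s, c.IsCycle) :
    (dProd s hd).cycleFactorsFinset = s :=
  Equiv.Perm.cycleFactorsFinset_eq_finset.mpr ⟨hc, hd, rfl⟩

lemma card_support_dProd (s : Finset (Perm (Fin n)))
    (hd : (s : Set (Perm (Fin n))).Pairwise Equiv.Perm.Disjoint) :
    (dProd s hd).support.card = ∑ c ∈ s, c.support.card := by
  rw [support_dProd, Finset.card_biUnion]
  intro x hx y hy hxy
  exact Equiv.Perm.disjoint_iff_disjoint_support.mp (hd (by simp [hx]) (by simp [hy]) hxy)

lemma cycLen_dProd {s : Finset (Perm (Fin n))}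
    {hd : (s : Set (Perm (Fin n))).Pairwise Equiv.Perm.Disjoint}
    (hc : ∀ c ∈ s, c.IsCycle)
    {c : Perm (Fin n)} (hcs : c ∈ s) {i : Fin n} (hi : i ∈ c.support) :
    cycLen (dProd s hd) i = c.support.card := by
  have hfac : c ∈ (dProd s hd).cycleFactorsFinset := by
    rw [cycleFactors_dProd s hd hc]; exact hcs
  have h2 := Equiv.Perm.cycle_is_cycleOf hi hfac
  rw [cycLen, ← h2]


variable (k : ℕ) (lam : ℕ → ℝ)

noncomputable def classOf (v : ℝ) : Finset ℕ := (Finset.Icc 2 k).filter (fun ℓ => lam ℓ = v)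

noncomputable def sols (W : Fin n → Finset (Fin n)) (L : Finset ℕ) (A : Finset (Fin n)) :
    Finset (Perm (Fin n)) :=
  @Finset.filter _
    (fun π => π.support ⊆ A ∧ ∀ i, π i ≠ i → π i ∈ W i ∧ cycLen π i ∈ L)
    (Classical.decPred _) Finset.univ

lemma mem_sols {W : Fin n → Finset (Fin n)} {L : Finset ℕ} {A : Finset (Fin n)}
    {π : Perm (Fin n)} :
    π ∈ sols W L A ↔ π.support ⊆ A ∧ ∀ i, π i ≠ i → π i ∈ W i ∧ cycLen π i ∈ L := by
  constructor
  · intro h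
    exact ((@Finset.mem_filter _ _ (Classical.decPred _) _ _).mp h).2
  · intro h
    exact (@Finset.mem_filter _ _ (Classical.decPred _) _ _).mpr ⟨Finset.mem_univ _, h⟩

lemma one_mem_sols {W : Fin n → Finset (Fin n)} {L : Finset ℕ} {A : Finset (Fin n)} :
    (1 : Perm (Fin n)) ∈ sols W L A := by
  rw [mem_sols]
  constructor
  · simp
  · intro i hi; simp at hi

noncomputable def stageSol (W : Fin n → Finset (Fin n)) (v : ℝ) (σ : Perm (Fin n)) :
    Perm (Fin n) :=
  pick (sols W (classOf k lam v) (Finset.univ \ σ.support))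

lemma stageSol_disjoint (W : Fin n → Finset (Fin n)) (v : ℝ) (σ : Perm (Fin n)) :
    σ.Disjoint (stageSol k lam W v σ) := by
  rw [Equiv.Perm.disjoint_iff_disjoint_support]
  have hmem := pick_mem (⟨1, one_mem_sols⟩ :
    (sols W (classOf k lam v) (Finset.univ \ σ.support)).Nonempty)
  have hsub := (mem_sols.mp hmem).1
  rw [Finset.disjoint_right]
  intro a ha
  have := hsub ha
  simp only [Finset.mem_sdiff] at this
  exact this.2

lemma stageSol_mem (W : Fin n → Finset (Fin n)) (v : ℝ) (σ : Perm (Fin n)) :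
    stageSol k lam W v σ ∈ sols W (classOf k lam v) (Finset.univ \ σ.support) :=
  pick_mem ⟨1, one_mem_sols⟩

noncomputable def IOrec (W : Fin n → Finset (Fin n)) : List ℝ → Perm (Fin n) → Perm (Fin n)
  | [], σ => σ
  | v :: vs, σ => IOrec W vs (σ * stageSol k lam W v σ)

/-- Frozen agents keep their assignment and cycle length; support only grows. -/
lemma IOrec_frozen (W : Fin n → Finset (Fin n)) :
    ∀ (vs : List ℝ) (σ : Perm (Fin n)) (i : Fin n), i ∈ σ.support →
      (IOrec k lam W vs σ) i = σ i ∧ cycLen (IOrec k lam W vs σ) i = cycLen σ i ∧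
        i ∈ (IOrec k lam W vs σ).support
  | [], σ, i, hi => ⟨rfl, rfl, hi⟩
  | v :: vs, σ, i, hi => by
    have hd := stageSol_disjoint k lam W v σ
    have hi' : i ∈ (σ * stageSol k lam W v σ).support := by
      rw [hd.support_mul]; exact Finset.mem_union_left _ hi
    obtain ⟨h1, h2, h3⟩ := IOrec_frozen W vs (σ * stageSol k lam W v σ) i hi'
    refine ⟨?_, ?_, h3⟩
    · rw [IOrec, h1, mul_apply_left hd hi]
    · rw [IOrec, h2, cycLen_mul_left hd hi]

lemma IOrec_support_mono (W : Fin n → Finset (Fin n)) :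
    ∀ (vs : List ℝ) (σ : Perm (Fin n)), σ.support ⊆ (IOrec k lam W vs σ).support :=
  fun vs σ i hi => (IOrec_frozen k lam W vs σ i hi).2.2


lemma utility_eq_zero {lam : ℕ → ℝ} {π : Perm (Fin n)} {i : Fin n} (h : i ∉ π.support) :
    utility lam π i = 0 := by
  rw [utility, if_neg]
  simpa using Equiv.Perm.notMem_support.mp h

lemma utility_mem_support {lam : ℕ → ℝ} {π : Perm (Fin n)} {i : Fin n} (h : i ∈ π.support) :
    utility lam π i = lam (cycLen π i) := by
  rw [utility, if_pos (Equiv.Perm.mem_support.mp h)]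

lemma utility_mul_disjoint {lam : ℕ → ℝ} {σ π : Perm (Fin n)} (h : σ.Disjoint π) (i : Fin n) :
    utility lam (σ * π) i = utility lam σ i + utility lam π i := by
  have hds := Equiv.Perm.disjoint_iff_disjoint_support.mp h
  by_cases hσ : i ∈ σ.support
  · have hπ : i ∉ π.support := Finset.disjoint_left.mp hds hσ
    have hm : i ∈ (σ * π).support := by rw [h.support_mul]; exact Finset.mem_union_left _ hσ
    rw [utility_mem_support hm, utility_mem_support hσ, utility_eq_zero hπ,
      cycLen_mul_left h hσ, add_zero]
  · by_cases hπ : i ∈ π.support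
    · have hm : i ∈ (σ * π).support := by rw [h.support_mul]; exact Finset.mem_union_right _ hπ
      rw [utility_mem_support hm, utility_mem_support hπ, utility_eq_zero hσ,
        cycLen_mul_right h hπ, zero_add]
    · have hm : i ∉ (σ * π).support := by
        rw [h.support_mul]; simp [hσ, hπ]
      rw [utility_eq_zero hm, utility_eq_zero hσ, utility_eq_zero hπ, add_zero]

lemma SW_mul_disjoint {lam : ℕ → ℝ} {σ π : Perm (Fin n)} (h : σ.Disjoint π) :
    SW lam (σ * π) = SW lam σ + SW lam π := by
  rw [SW, SW, SW, ← Finset.sum_add_distrib]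
  exact Finset.sum_congr rfl (fun i _ => utility_mul_disjoint h i)

lemma SW_eq_sum_support (lam : ℕ → ℝ) (π : Perm (Fin n)) :
    SW lam π = ∑ i ∈ π.support, lam (cycLen π i) := by
  rw [SW]
  rw [← Finset.sum_subset (Finset.subset_univ π.support)
    (fun x _ hx => utility_eq_zero hx)]
  exact Finset.sum_congr rfl (fun i hi => utility_mem_support hi)

lemma classOf_subset_Icc {v : ℝ} : classOf k lam v ⊆ Finset.Icc 2 k :=
  Finset.filter_subset _ _

lemma mem_classOf {v : ℝ} {ℓ : ℕ} :
    ℓ ∈ classOf k lam v ↔ (2 ≤ ℓ ∧ ℓ ≤ k) ∧ lam ℓ = v := by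
  rw [classOf, Finset.mem_filter, Finset.mem_Icc]

/-- The welfare of a stage solution is `v` times the number of matched agents. -/
lemma SW_stage {W : Fin n → Finset (Fin n)} {v : ℝ} {A : Finset (Fin n)}
    {π : Perm (Fin n)} (hπ : π ∈ sols W (classOf k lam v) A) :
    SW lam π = v * π.support.card := by
  rw [SW_eq_sum_support]
  have : ∀ i ∈ π.support, lam (cycLen π i) = v := by
    intro i hi
    have h := ((mem_sols.mp hπ).2 i (Equiv.Perm.mem_support.mp hi)).2
    exact (mem_classOf k lam).mp h |>.2
  rw [Finset.sum_congr rfl this, Finset.sum_const, nsmul_eq_mul, mul_comm]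

/-- Feasibility is preserved along the run. -/
lemma IOrec_feasibleInv (W : Fin n → Finset (Fin n)) :
    ∀ (vs : List ℝ) (σ : Perm (Fin n)),
      (∀ i, σ i ≠ i → σ i ∈ W i ∧ cycLen σ i ≤ k) →
      ∀ i, (IOrec k lam W vs σ) i ≠ i →
        (IOrec k lam W vs σ) i ∈ W i ∧ cycLen (IOrec k lam W vs σ) i ≤ k
  | [], σ, hσ => hσ
  | v :: vs, σ, hσ => by
    set π₁ := stageSol k lam W v σ with hπ₁def
    have hd := stageSol_disjoint k lam W v σ
    refine IOrec_feasibleInv W vs (σ * π₁) ?_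
    intro i hi
    have hi' : i ∈ (σ * π₁).support := Equiv.Perm.mem_support.mpr hi
    rw [hd.support_mul] at hi'
    rcases Finset.mem_union.mp hi' with hiσ | hiπ
    · rw [mul_apply_left hd hiσ, cycLen_mul_left hd hiσ]
      exact hσ i (Equiv.Perm.mem_support.mp hiσ)
    · rw [mul_apply_right hd hiπ, cycLen_mul_right hd hiπ]
      have hsol := mem_sols.mp (stageSol_mem k lam W v σ)
      obtain ⟨hw, hc⟩ := hsol.2 i (Equiv.Perm.mem_support.mp hiπ)
      exact ⟨hw, (Finset.mem_Icc.mp (classOf_subset_Icc k lam hc)).2⟩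


noncomputable def values : List ℝ := ((Finset.Icc 2 k).image lam).sort (· ≥ ·)

lemma mem_values {v : ℝ} : v ∈ values k lam ↔ ∃ ℓ, (2 ≤ ℓ ∧ ℓ ≤ k) ∧ lam ℓ = v := by
  rw [values, Finset.mem_sort]
  simp [Finset.mem_image, Finset.mem_Icc]

lemma values_sorted : (values k lam).Pairwise (· ≥ ·) := Finset.pairwise_sort _ _

lemma values_nodup : (values k lam).Nodup := Finset.sort_nodup _ _

lemma utility_frozen {lam : ℕ → ℝ} {W : Fin n → Finset (Fin n)} {vs : List ℝ}
    {σ : Perm (Fin n)} {i : Fin n} (hi : i ∈ σ.support) :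
    utility lam (IOrec k lam W vs σ) i = lam (cycLen σ i) := by
  obtain ⟨h1, h2, h3⟩ := IOrec_frozen k lam W vs σ i hi
  rw [utility_mem_support h3, h2]

lemma run_utility_le {W : Fin n → Finset (Fin n)} {i : Fin n} {v : ℝ} :
    ∀ (vs : List ℝ) (σ : Perm (Fin n)), (∀ v' ∈ vs, v' ≤ v) → 0 ≤ v →
      i ∉ σ.support → utility lam (IOrec k lam W vs σ) i ≤ v
  | [], σ, _, hv, hi => by
    rw [IOrec, utility_eq_zero hi]; exact hv
  | v₁ :: vs, σ, hvs, hv, hi => by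
    set π₁ := stageSol k lam W v₁ σ with hπ₁def
    have hd := stageSol_disjoint k lam W v₁ σ
    rw [show IOrec k lam W (v₁ :: vs) σ = IOrec k lam W vs (σ * π₁) from rfl]
    by_cases hiπ : i ∈ π₁.support
    · have hi₁ : i ∈ (σ * π₁).support := by
        rw [hd.support_mul]; exact Finset.mem_union_right _ hiπ
      rw [utility_frozen k hi₁, cycLen_mul_right hd hiπ]
      have hc := ((mem_sols.mp (stageSol_mem k lam W v₁ σ)).2 i
        (Equiv.Perm.mem_support.mp hiπ)).2
      rw [((mem_classOf k lam).mp hc).2]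
      exact hvs v₁ List.mem_cons_self
    · have hi₁ : i ∉ (σ * π₁).support := by
        rw [hd.support_mul]; simp [hi, hiπ]; exact Equiv.Perm.notMem_support.mp hiπ
      exact run_utility_le vs (σ * π₁) (fun v' hv' => hvs v' (List.mem_cons_of_mem _ hv')) hv hi₁

lemma sols_mono {W W' : Fin n → Finset (Fin n)} (hW : ∀ j, W j ⊆ W' j)
    {L : Finset ℕ} {A : Finset (Fin n)} : sols W L A ⊆ sols W' L A := by
  intro π hπ
  obtain ⟨h1, h2⟩ := mem_sols.mp hπ
  exact mem_sols.mpr ⟨h1, fun i hi => ⟨hW i (h2 i hi).1, (h2 i hi).2⟩⟩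

lemma truth_key {W W' : Fin n → Finset (Fin n)} {i : Fin n}
    (hW : ∀ j, W j ⊆ W' j) (hWd : ∀ j, j ≠ i → W j = W' j) :
    ∀ (vs : List ℝ) (σ : Perm (Fin n)), vs.Pairwise (· ≥ ·) → (∀ v ∈ vs, 0 < v) →
      i ∉ σ.support →
      utility lam (IOrec k lam W vs σ) i ≤ utility lam (IOrec k lam W' vs σ) i
  | [], σ, _, _, _ => le_refl _
  | v₁ :: vs, σ, hsort, hpos, hi => by
    set A := Finset.univ \ σ.support with hA
    have hst : sols W (classOf k lam v₁) A ⊆ sols W' (classOf k lam v₁) A :=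
      sols_mono hW
    have hπ'mem := stageSol_mem k lam W' v₁ σ
    by_cases hmem : stageSol k lam W' v₁ σ ∈ sols W (classOf k lam v₁) A
    · -- the two picks coincide
      have heq : stageSol k lam W v₁ σ = stageSol k lam W' v₁ σ :=
        pick_eq_of_subset hst hmem
      set π₁ := stageSol k lam W v₁ σ with hπ₁def
      have hd := stageSol_disjoint k lam W v₁ σ
      rw [show IOrec k lam W (v₁ :: vs) σ = IOrec k lam W vs (σ * π₁) from rfl]
      rw [show IOrec k lam W' (v₁ :: vs) σ = IOrec k lam W' vs
        (σ * stageSol k lam W' v₁ σ) from rfl, ← heq]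
      by_cases hiπ : i ∈ π₁.support
      · have hi₁ : i ∈ (σ * π₁).support := by
          rw [hd.support_mul]; exact Finset.mem_union_right _ hiπ
        rw [utility_frozen k hi₁, utility_frozen k hi₁]
      · have hi₁ : i ∉ (σ * π₁).support := by
          rw [hd.support_mul]; simp [hi, hiπ]; exact Equiv.Perm.notMem_support.mp hiπ
        exact truth_key hW hWd vs (σ * π₁) hsort.of_cons
          (fun v hv => hpos v (List.mem_cons_of_mem _ hv)) hi₁
    · -- the truthful pick matches i in the current (best remaining) class
      set π' := stageSol k lam W' v₁ σ with hπ'def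
      have hiπ' : i ∈ π'.support := by
        obtain ⟨hsub, hcond⟩ := mem_sols.mp hπ'mem
        by_contra hc
        apply hmem
        refine mem_sols.mpr ⟨hsub, fun j hj => ?_⟩
        have hji : j ≠ i := by
          rintro rfl; exact hc (Equiv.Perm.mem_support.mpr hj)
        rw [hWd j hji]
        exact hcond j hj
      have hd' := stageSol_disjoint k lam W' v₁ σ
      have hi₁' : i ∈ (σ * π').support := by
        rw [hd'.support_mul]; exact Finset.mem_union_right _ hiπ'
      rw [show IOrec k lam W' (v₁ :: vs) σ = IOrec k lam W' vs (σ * π') from rfl]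
      rw [utility_frozen k hi₁', cycLen_mul_right hd' hiπ']
      have hc := ((mem_sols.mp hπ'mem).2 i (Equiv.Perm.mem_support.mp hiπ')).2
      rw [((mem_classOf k lam).mp hc).2]
      refine run_utility_le k lam (v₁ :: vs) σ ?_ (le_of_lt (hpos v₁ List.mem_cons_self)) hi
      intro v' hv'
      rcases List.mem_cons.mp hv' with rfl | hv'
      · exact le_refl _
      · exact List.rel_of_pairwise_cons hsort hv'


section rhoFacts

variable (hpos : ∀ ℓ : ℕ, 2 ≤ ℓ → ℓ ≤ k → 0 < lam ℓ)
    (hone : ∀ ℓ : ℕ, 2 ≤ ℓ → ℓ ≤ k → lam ℓ ≤ 1)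

def rhoSet (k : ℕ) (lam : ℕ → ℝ) : Set ℝ :=
  {x : ℝ |
    ∃ ℓ ℓ' : ℕ, 2 ≤ ℓ ∧ ℓ < ℓ' ∧ ℓ' ≤ k ∧ lam ℓ' < lam ℓ ∧
      x = max ((ℓ' : ℝ) * lam ℓ' / lam ℓ)
              (((ℓ : ℝ) - 1) / (ℓ : ℝ) * ((ℓ' : ℝ) * lam ℓ' / lam ℓ) + 1)}

lemma rho_eq : rho k lam = sSup (rhoSet k lam) := rfl

include hpos hone in
lemma rhoSet_bddAbove : BddAbove (rhoSet k lam) := by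
  classical
  by_cases hk : 2 ≤ k
  · have hne : ((Finset.Icc 2 k).image lam).Nonempty := by
      refine Finset.image_nonempty.mpr ?_
      exact ⟨2, Finset.mem_Icc.mpr ⟨le_refl _, hk⟩⟩
    set m0 := ((Finset.Icc 2 k).image lam).min' hne with hm0
    have hm0pos : 0 < m0 := by
      obtain ⟨ℓ, hℓ, hval⟩ := Finset.mem_image.mp (Finset.min'_mem _ hne)
      rw [hm0, ← hval]
      obtain ⟨h2, hk'⟩ := Finset.mem_Icc.mp hℓ
      exact hpos ℓ h2 hk'
    refine ⟨(k : ℝ) / m0 + 1, fun x hx => ?_⟩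
    obtain ⟨ℓ, ℓ', h2, hlt, hk', hdec, rfl⟩ := hx
    have hl2 : 2 ≤ ℓ' := le_trans h2 (le_of_lt hlt)
    have hlk : ℓ ≤ k := le_trans (le_of_lt hlt) hk'
    have hm0le : m0 ≤ lam ℓ := Finset.min'_le _ _
      (Finset.mem_image.mpr ⟨ℓ, Finset.mem_Icc.mpr ⟨h2, hlk⟩, rfl⟩)
    have hlampos : 0 < lam ℓ := hpos ℓ h2 hlk
    have hlam'pos : 0 < lam ℓ' := hpos ℓ' hl2 hk'
    have hnum : (ℓ' : ℝ) * lam ℓ' ≤ (k : ℝ) := by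
      calc (ℓ' : ℝ) * lam ℓ' ≤ (ℓ' : ℝ) * 1 := by
            exact mul_le_mul_of_nonneg_left (hone ℓ' hl2 hk') (by positivity)
        _ = (ℓ' : ℝ) := mul_one _
        _ ≤ (k : ℝ) := by exact_mod_cast hk'
    have hbase : (ℓ' : ℝ) * lam ℓ' / lam ℓ ≤ (k : ℝ) / m0 := by
      apply div_le_div₀ (by positivity) hnum hm0pos hm0le
    have hcoef : ((ℓ : ℝ) - 1) / (ℓ : ℝ) ≤ 1 := by
      have : (0:ℝ) < (ℓ:ℝ) := by positivity
      rw [div_le_one this]; linarith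
    have hbnn : 0 ≤ (ℓ' : ℝ) * lam ℓ' / lam ℓ := by positivity
    have hkm0 : (0:ℝ) ≤ (k : ℝ) / m0 := by positivity
    refine max_le ?_ ?_
    · linarith
    · have : ((ℓ : ℝ) - 1) / (ℓ : ℝ) * ((ℓ' : ℝ) * lam ℓ' / lam ℓ)
          ≤ (ℓ' : ℝ) * lam ℓ' / lam ℓ := by
        nlinarith
      linarith
  · refine ⟨1, fun x hx => ?_⟩
    obtain ⟨ℓ, ℓ', h2, hlt, hk', _, rfl⟩ := hx
    exact absurd (le_trans h2 (le_trans (le_of_lt hlt) hk')) hk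

include hpos hone in
lemma le_rho {x : ℝ} (hx : x ∈ rhoSet k lam) : x ≤ rho k lam :=
  le_csSup (rhoSet_bddAbove k lam hpos hone) hx

include hpos hone in
lemma one_le_rho (hnu : ∃ ℓ ℓ' : ℕ, 2 ≤ ℓ ∧ ℓ < ℓ' ∧ ℓ' ≤ k ∧ lam ℓ' < lam ℓ) :
    1 ≤ rho k lam := by
  obtain ⟨ℓ, ℓ', h2, hlt, hk', hdec⟩ := hnu
  set x := max ((ℓ' : ℝ) * lam ℓ' / lam ℓ)
      (((ℓ : ℝ) - 1) / (ℓ : ℝ) * ((ℓ' : ℝ) * lam ℓ' / lam ℓ) + 1) with hx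
  have hmem : x ∈ rhoSet k lam := ⟨ℓ, ℓ', h2, hlt, hk', hdec, rfl⟩
  have h1x : 1 ≤ x := by
    have hl2 : 2 ≤ ℓ' := le_trans h2 (le_of_lt hlt)
    have hlampos : 0 < lam ℓ := hpos ℓ h2 (le_trans (le_of_lt hlt) hk')
    have hlam'pos : 0 < lam ℓ' := hpos ℓ' hl2 hk'
    have h0 : (0:ℝ) ≤ ((ℓ : ℝ) - 1) / (ℓ : ℝ) * ((ℓ' : ℝ) * lam ℓ' / lam ℓ) := by
      have h1 : (0:ℝ) ≤ ((ℓ : ℝ) - 1) / (ℓ : ℝ) := by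
        apply div_nonneg _ (by positivity)
        have : (2:ℝ) ≤ (ℓ:ℝ) := by exact_mod_cast h2
        linarith
      have h2' : (0:ℝ) ≤ (ℓ' : ℝ) * lam ℓ' / lam ℓ := by positivity
      exact mul_nonneg h1 h2'
    calc (1:ℝ) ≤ ((ℓ : ℝ) - 1) / (ℓ : ℝ) * ((ℓ' : ℝ) * lam ℓ' / lam ℓ) + 1 := by linarith
      _ ≤ x := le_max_right _ _
  exact le_trans h1x (le_rho k lam hpos hone hmem)

end rhoFacts

section cycleFacts

variable {π : Perm (Fin n)} {c : Perm (Fin n)} (hc : c ∈ π.cycleFactorsFinset)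

include hc in
lemma factor_isCycle : c.IsCycle := (Equiv.Perm.mem_cycleFactorsFinset_iff.mp hc).1

include hc in
lemma factor_two_le : 2 ≤ c.support.card :=
  (factor_isCycle hc).two_le_card_support

include hc in
lemma factor_apply {i : Fin n} (hi : i ∈ c.support) : c i = π i :=
  (Equiv.Perm.mem_cycleFactorsFinset_iff.mp hc).2 i hi

include hc in
lemma factor_support_le : c.support ⊆ π.support :=
  Equiv.Perm.mem_cycleFactorsFinset_support_le hc

include hc in
lemma factor_cycLen {i : Fin n} (hi : i ∈ c.support) : cycLen π i = c.support.card := by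
  rw [cycLen, ← Equiv.Perm.cycle_is_cycleOf hi hc]

lemma cycLen_self_of_cycle {c : Perm (Fin n)} (hcyc : c.IsCycle) {i : Fin n}
    (hi : i ∈ c.support) : cycLen c i = c.support.card := by
  rw [cycLen, hcyc.cycleOf_eq (Equiv.Perm.mem_support.mp hi)]

lemma support_eq_biUnion_factors (π : Perm (Fin n)) :
    π.support = π.cycleFactorsFinset.biUnion Equiv.Perm.support := by
  ext x
  rw [Finset.mem_biUnion]
  exact ⟨fun h => Equiv.Perm.mem_support_iff_mem_support_of_mem_cycleFactorsFinset.mp h,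
    fun h => Equiv.Perm.mem_support_iff_mem_support_of_mem_cycleFactorsFinset.mpr h⟩

lemma SW_eq_sum_cycles (lam : ℕ → ℝ) (π : Perm (Fin n)) :
    SW lam π = ∑ c ∈ π.cycleFactorsFinset,
      (c.support.card : ℝ) * lam (c.support.card) := by
  rw [SW_eq_sum_support, support_eq_biUnion_factors π, Finset.sum_biUnion]
  · refine Finset.sum_congr rfl (fun c hc => ?_)
    have : ∀ i ∈ c.support, lam (cycLen π i) = lam (c.support.card) := by
      intro i hi; rw [factor_cycLen hc hi]
    rw [Finset.sum_congr rfl this, Finset.sum_const, nsmul_eq_mul]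
  · intro x hx y hy hxy
    exact Equiv.Perm.disjoint_iff_disjoint_support.mp
      ((Equiv.Perm.cycleFactorsFinset_pairwise_disjoint π) (by simpa using hx)
        (by simpa using hy) hxy)

end cycleFacts

lemma stage_arith {v q M ρ : ℝ} {u t D n₁ : ℕ} (hv : 0 < v) (hq : 0 ≤ q) (hM : 2 ≤ M)
    (hun : (u : ℝ) ≤ n₁) (htD : (t : ℝ) + (D : ℝ) ≤ (n₁ : ℝ)) (huMt : (u : ℝ) ≤ M * t)
    (hq1 : q ≤ ρ * v) (hq2 : (M - 1) / M * (q / v) + 1 ≤ ρ) :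
    v * u + D * q ≤ ρ * (v * n₁) := by
  have hM0 : (0 : ℝ) < M := by linarith
  have hq2' : M * v + (M - 1) * q ≤ ρ * (M * v) := by
    have h := mul_le_mul_of_nonneg_right hq2 (show (0:ℝ) ≤ M * v by positivity)
    have he : ((M - 1) / M * (q / v) + 1) * (M * v) = M * v + (M - 1) * q := by
      field_simp
      ring
    rw [he] at h
    exact h
  have hu0 : (0 : ℝ) ≤ u := Nat.cast_nonneg _
  have hn0 : (0 : ℝ) ≤ n₁ := Nat.cast_nonneg _
  have hMtD : M * ((t : ℝ) + D) ≤ M * n₁ := mul_le_mul_of_nonneg_left htD (le_of_lt hM0)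
  have h1 : M * (D : ℝ) * q ≤ (M * n₁ - u) * q := by
    have : M * (D : ℝ) ≤ M * n₁ - u := by nlinarith
    exact mul_le_mul_of_nonneg_right this hq
  rcases le_or_gt q (M * v) with hcase | hcase
  · have h2 : M * v * u - u * q ≤ M * v * n₁ - n₁ * q := by
      nlinarith [mul_nonneg (sub_nonneg.mpr hun) (sub_nonneg.mpr hcase)]
    have h3 : M * (v * u + D * q) ≤ (n₁ : ℝ) * (M * v + (M - 1) * q) := by nlinarith
    have h4 : (n₁ : ℝ) * (M * v + (M - 1) * q) ≤ n₁ * (ρ * (M * v)) :=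
      mul_le_mul_of_nonneg_left hq2' hn0
    have h5 : M * (v * u + D * q) ≤ M * (ρ * (v * n₁)) := by nlinarith
    exact le_of_mul_le_mul_left h5 hM0
  · have h2 : M * v * u ≤ u * q := by
      nlinarith [mul_nonneg hu0 (le_of_lt (sub_pos.mpr hcase))]
    have h3 : M * (v * u + D * q) ≤ M * n₁ * q := by nlinarith
    have h4 : M * (n₁ : ℝ) * q ≤ M * n₁ * (ρ * v) :=
      mul_le_mul_of_nonneg_left hq1 (by positivity)
    have h5 : M * (v * u + D * q) ≤ M * (ρ * (v * n₁)) := by nlinarith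
    exact le_of_mul_le_mul_left h5 hM0

section approx

variable {Wstar : Fin n → Finset (Fin n)} {πs : Perm (Fin n)}

/-- basic facts about a cycle of a feasible exchange -/
lemma factor_len_le_k (hfeas : ∀ i, πs i ≠ i → πs i ∈ Wstar i ∧ cycLen πs i ≤ k)
    {c : Perm (Fin n)} (hc : c ∈ πs.cycleFactorsFinset) : c.support.card ≤ k := by
  have h2 := factor_two_le hc
  obtain ⟨i, hi⟩ := Finset.card_pos.mp (show 0 < c.support.card by omega)
  have hπi : πs i ≠ i :=
    Equiv.Perm.mem_support.mp (factor_support_le hc hi)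
  have := (hfeas i hπi).2
  rwa [factor_cycLen hc hi] at this

lemma approx_rec
    (hpos : ∀ ℓ : ℕ, 2 ≤ ℓ → ℓ ≤ k → 0 < lam ℓ)
    (hone : ∀ ℓ : ℕ, 2 ≤ ℓ → ℓ ≤ k → lam ℓ ≤ 1)
    (hmono : ∀ ℓ ℓ' : ℕ, 2 ≤ ℓ → ℓ ≤ ℓ' → ℓ' ≤ k → lam ℓ' ≤ lam ℓ)
    (hρ1 : 1 ≤ rho k lam)
    (hfeas : ∀ i, πs i ≠ i → πs i ∈ Wstar i ∧ cycLen πs i ≤ k) :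
    ∀ (vs : List ℝ) (σ : Perm (Fin n)), vs.Pairwise (· ≥ ·) → vs.Nodup →
      (∀ v' ∈ vs, ∃ ℓ : ℕ, 2 ≤ ℓ ∧ ℓ ≤ k ∧ lam ℓ = v') →
      (∀ c ∈ πs.cycleFactorsFinset, Disjoint c.support σ.support →
        lam c.support.card ∈ vs) →
      ∑ c ∈ πs.cycleFactorsFinset.filter (fun c => Disjoint c.support σ.support),
          ((c.support.card : ℝ) * lam (c.support.card))
        ≤ rho k lam * (SW lam (IOrec k lam Wstar vs σ) - SW lam σ)
  | [], σ, _, _, _, huntouched => by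
    have hempty : πs.cycleFactorsFinset.filter
        (fun c => Disjoint c.support σ.support) = ∅ := by
      refine Finset.filter_eq_empty_iff.mpr (fun {c} hc hdisj => ?_)
      exact absurd (huntouched c hc hdisj) List.not_mem_nil
    rw [hempty, Finset.sum_empty, show IOrec k lam Wstar [] σ = σ from rfl]
    simp
  | v :: vs, σ, hsort, hnodup, hcls, huntouched => by
    classical
    set π₁ := stageSol k lam Wstar v σ with hπ₁def
    have hd : σ.Disjoint π₁ := stageSol_disjoint k lam Wstar v σ
    have hπ₁mem := stageSol_mem k lam Wstar v σ
    set n₁ := π₁.support.card with hn₁def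
    set F := πs.cycleFactorsFinset with hF
    -- class representative
    obtain ⟨ℓ0, hℓ02, hℓ0k, hℓ0v⟩ := hcls v List.mem_cons_self
    have hℓ0cls : ℓ0 ∈ classOf k lam v := (mem_classOf k lam).mpr ⟨⟨hℓ02, hℓ0k⟩, hℓ0v⟩
    set M := (classOf k lam v).max' ⟨ℓ0, hℓ0cls⟩ with hMdef
    have hMcls := (mem_classOf k lam).mp ((classOf k lam v).max'_mem ⟨ℓ0, hℓ0cls⟩)
    have hM2 : 2 ≤ M := hMcls.1.1
    have hMk : M ≤ k := hMcls.1.2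
    have hMv : lam M = v := hMcls.2
    have hv : 0 < v := hMv ▸ hpos M hM2 hMk
    -- no surviving class-v cycle
    have claim_nosurv : ∀ c ∈ F, Disjoint c.support σ.support →
        Disjoint c.support π₁.support → lam c.support.card ≠ v := by
      intro c hc hdisjσ hdisjπ hlamv
      have hdc : π₁.Disjoint c := by
        rw [Equiv.Perm.disjoint_iff_disjoint_support]
        exact hdisjπ.symm
      have hlen2 := factor_two_le hc
      have hlenk := factor_len_le_k k hfeas hc
      have hcyc := factor_isCycle hc
      have hμmem : π₁ * c ∈ sols Wstar (classOf k lam v) (Finset.univ \ σ.support) := by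
        refine mem_sols.mpr ⟨?_, ?_⟩
        · rw [hdc.support_mul]
          refine Finset.union_subset (mem_sols.mp hπ₁mem).1 (fun x hx => ?_)
          simp only [Finset.mem_sdiff, Finset.mem_univ, true_and]
          exact Finset.disjoint_left.mp hdisjσ hx
        · intro i hi
          have hi' : i ∈ (π₁ * c).support := Equiv.Perm.mem_support.mpr hi
          rw [hdc.support_mul] at hi'
          rcases Finset.mem_union.mp hi' with hiπ | hic
          · rw [mul_apply_left hdc hiπ, cycLen_mul_left hdc hiπ]
            exact (mem_sols.mp hπ₁mem).2 i (Equiv.Perm.mem_support.mp hiπ)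
          · have hci : c i = πs i := factor_apply hc hic
            have hπsi : πs i ≠ i := by
              rw [← hci]; exact Equiv.Perm.mem_support.mp hic
            rw [mul_apply_right hdc hic, cycLen_mul_right hdc hic, hci,
              cycLen_self_of_cycle hcyc hic]
            exact ⟨(hfeas i hπsi).1, (mem_classOf k lam).mpr ⟨⟨hlen2, hlenk⟩, hlamv⟩⟩
      have hcard := pick_max hμmem
      rw [hdc.card_support_mul,
        show (pick (sols Wstar (classOf k lam v) (Finset.univ \ σ.support))) = π₁ from rfl]
        at hcard
      omega
    -- the sets
    set U := F.filter (fun c => Disjoint c.support σ.support) with hU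
    set T := U.filter (fun c => ¬ Disjoint c.support π₁.support) with hT
    set U₁ := U.filter (fun c => Disjoint c.support π₁.support) with hU₁
    set a := T.filter (fun c => lam c.support.card = v) with ha
    set b := T.filter (fun c => ¬ lam c.support.card = v) with hb
    have hsplit1 : ∑ c ∈ U, ((c.support.card : ℝ) * lam (c.support.card))
        = ∑ c ∈ U₁, ((c.support.card : ℝ) * lam (c.support.card))
          + ∑ c ∈ T, ((c.support.card : ℝ) * lam (c.support.card)) := by
      rw [hU₁, hT]
      exact (Finset.sum_filter_add_sum_filter_not U _ _).symm
    have hsplit2 : ∑ c ∈ T, ((c.support.card : ℝ) * lam (c.support.card))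
        = ∑ c ∈ a, ((c.support.card : ℝ) * lam (c.support.card))
          + ∑ c ∈ b, ((c.support.card : ℝ) * lam (c.support.card)) := by
      rw [ha, hb]
      exact (Finset.sum_filter_add_sum_filter_not T _ _).symm
    -- recursion
    have hU₁eq : U₁ = F.filter (fun c => Disjoint c.support (σ * π₁).support) := by
      rw [hU₁, hU, Finset.filter_filter]
      refine Finset.filter_congr (fun c _ => ?_)
      rw [hd.support_mul, Finset.disjoint_union_right]
    have huntouched₁ : ∀ c ∈ F, Disjoint c.support (σ * π₁).support →
        lam c.support.card ∈ vs := by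
      intro c hc hdisj
      rw [hd.support_mul, Finset.disjoint_union_right] at hdisj
      have hmem := huntouched c hc hdisj.1
      rcases List.mem_cons.mp hmem with heq | htail
      · exact absurd heq (claim_nosurv c hc hdisj.1 hdisj.2)
      · exact htail
    have hIH := approx_rec hpos hone hmono hρ1 hfeas vs (σ * π₁)
      hsort.of_cons (List.nodup_cons.mp hnodup).2
      (fun v' hv' => hcls v' (List.mem_cons_of_mem _ hv')) huntouched₁
    rw [← hU₁eq] at hIH
    -- welfare of this stage
    have hSWσ₁ : SW lam (σ * π₁) = SW lam σ + v * n₁ := by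
      rw [SW_mul_disjoint hd, SW_stage k lam hπ₁mem]
    -- (K2) u ≤ n₁
    have haF : a ⊆ F := by
      rw [ha, hT, hU]
      exact subset_trans (Finset.filter_subset _ _)
        (subset_trans (Finset.filter_subset _ _) (Finset.filter_subset _ _))
    have hbF : b ⊆ F := by
      rw [hb, hT, hU]
      exact subset_trans (Finset.filter_subset _ _)
        (subset_trans (Finset.filter_subset _ _) (Finset.filter_subset _ _))
    have hTF : T ⊆ F := by
      rw [hT, hU]
      exact subset_trans (Finset.filter_subset _ _) (Finset.filter_subset _ _)
    have hpdF : ((F : Finset (Perm (Fin n))) : Set (Perm (Fin n))).Pairwise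
        Equiv.Perm.Disjoint := Equiv.Perm.cycleFactorsFinset_pairwise_disjoint πs
    have hpda : ((a : Finset (Perm (Fin n))) : Set (Perm (Fin n))).Pairwise
        Equiv.Perm.Disjoint := hpdF.mono (Finset.coe_subset.mpr haF)
    have haU : a ⊆ U := by
      rw [ha, hT]
      exact subset_trans (Finset.filter_subset _ _) (Finset.filter_subset _ _)
    have hPmem : dProd a hpda ∈ sols Wstar (classOf k lam v) (Finset.univ \ σ.support) := by
      refine mem_sols.mpr ⟨?_, ?_⟩
      · rw [support_dProd]
        intro x hx
        obtain ⟨c, hca, hxc⟩ := Finset.mem_biUnion.mp hx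
        have hcU := haU hca
        have hdisj : Disjoint c.support σ.support := by
          rw [hU] at hcU
          exact (Finset.mem_filter.mp hcU).2
        simp only [Finset.mem_sdiff, Finset.mem_univ, true_and]
        exact Finset.disjoint_left.mp hdisj hxc
      · intro i hi
        have hi' : i ∈ (dProd a hpda).support := Equiv.Perm.mem_support.mpr hi
        rw [support_dProd] at hi'
        obtain ⟨c, hca, hic⟩ := Finset.mem_biUnion.mp hi'
        have hcF : c ∈ F := haF hca
        have hci : c i = πs i := factor_apply hcF hic
        have hπsi : πs i ≠ i := by
          rw [← hci]; exact Equiv.Perm.mem_support.mp hic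
        have happ : dProd a hpda i = c i := dProd_apply_mem hca hic
        have hcycl : cycLen (dProd a hpda) i = c.support.card :=
          cycLen_dProd (fun c' hc' => factor_isCycle (haF hc')) hca hic
        rw [happ, hci, hcycl]
        refine ⟨(hfeas i hπsi).1, (mem_classOf k lam).mpr
          ⟨⟨factor_two_le hcF, factor_len_le_k k hfeas hcF⟩, ?_⟩⟩
        rw [ha] at hca
        exact (Finset.mem_filter.mp hca).2
    have hu_le : ∑ c ∈ a, c.support.card ≤ n₁ := by
      have := pick_max hPmem
      rw [card_support_dProd] at this
      exact this
    -- (K3) T.card ≤ n₁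
    have hT_le : T.card ≤ n₁ := by
      rcases Finset.eq_empty_or_nonempty T with hTe | ⟨c₀, hc₀⟩
      · simp [hTe, hn₁def]
      · have h2 := factor_two_le (hTF hc₀)
        obtain ⟨i₀, _⟩ := Finset.card_pos.mp (by omega : 0 < c₀.support.card)
        set f : Perm (Fin n) → Fin n := fun c =>
          if h : (c.support ∩ π₁.support).Nonempty then h.choose else i₀ with hf
        have hchoice : ∀ c ∈ T, f c ∈ c.support ∩ π₁.support := by
          intro c hc
          have hnd : ¬ Disjoint c.support π₁.support := by
            rw [hT] at hc
            exact (Finset.mem_filter.mp hc).2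
          have hne : (c.support ∩ π₁.support).Nonempty :=
            Finset.not_disjoint_iff_nonempty_inter.mp hnd
          rw [hf]
          simp only [dif_pos hne]
          exact hne.choose_spec
        refine Finset.card_le_card_of_injOn f (fun c hc => ?_) ?_
        · exact (Finset.mem_inter.mp (hchoice c hc)).2
        · intro c hc c' hc' hfe
          by_contra hne
          have h1 := (Finset.mem_inter.mp (hchoice c hc)).1
          have h2' := (Finset.mem_inter.mp (hchoice c' hc')).1
          rw [hfe] at h1
          have hdisj := Equiv.Perm.disjoint_iff_disjoint_support.mp
            (hpdF (by simpa using hTF hc) (by simpa using hTF hc') hne)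
          exact Finset.disjoint_left.mp hdisj h1 h2'
    have hab_card : a.card + b.card = T.card := by
      rw [ha, hb]
      exact Finset.card_filter_add_card_filter_not _
    -- (K4) u ≤ M * t
    have hu_Mt : ∑ c ∈ a, c.support.card ≤ M * a.card := by
      calc ∑ c ∈ a, c.support.card ≤ ∑ _c ∈ a, M := by
            refine Finset.sum_le_sum (fun c hc => ?_)
            refine Finset.le_max' _ _ ((mem_classOf k lam).mpr
              ⟨⟨factor_two_le (haF hc), factor_len_le_k k hfeas (haF hc)⟩, ?_⟩)
            rw [ha] at hc
            exact (Finset.mem_filter.mp hc).2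
        _ = M * a.card := by rw [Finset.sum_const, smul_eq_mul, mul_comm]
    -- sum over a
    have hsum_a : ∑ c ∈ a, ((c.support.card : ℝ) * lam (c.support.card))
        = v * (∑ c ∈ a, c.support.card : ℕ) := by
      push_cast
      rw [Finset.mul_sum]
      refine Finset.sum_congr rfl (fun c hc => ?_)
      have : lam c.support.card = v := by
        rw [ha] at hc
        exact (Finset.mem_filter.mp hc).2
      rw [this, mul_comm]
    -- stage bound
    have hstage : ∑ c ∈ a, ((c.support.card : ℝ) * lam (c.support.card))
        + ∑ c ∈ b, ((c.support.card : ℝ) * lam (c.support.card))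
        ≤ rho k lam * (v * n₁) := by
      rcases Finset.eq_empty_or_nonempty b with hbe | hbne
      · rw [hbe, Finset.sum_empty, add_zero, hsum_a]
        have h1 : v * ((∑ c ∈ a, c.support.card : ℕ) : ℝ) ≤ v * n₁ := by
          refine mul_le_mul_of_nonneg_left ?_ (le_of_lt hv)
          exact_mod_cast hu_le
        have h2 : v * (n₁ : ℝ) ≤ rho k lam * (v * n₁) := by
          nlinarith [mul_nonneg (le_of_lt hv) (Nat.cast_nonneg n₁ : (0:ℝ) ≤ n₁)]
        linarith
      · obtain ⟨cs, hcsb, hcsmax⟩ := Finset.exists_max_image b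
          (fun c => (c.support.card : ℝ) * lam (c.support.card)) hbne
        set L := cs.support.card with hL
        set q := (L : ℝ) * lam L with hq
        have hL2 : 2 ≤ L := factor_two_le (hbF hcsb)
        have hLk : L ≤ k := factor_len_le_k k hfeas (hbF hcsb)
        have hLq0 : 0 < lam L := hpos L hL2 hLk
        have hq0 : 0 ≤ q := mul_nonneg (Nat.cast_nonneg L) hLq0.le
        -- lam L < v
        have hLv : lam L < v := by
          have hcsT : cs ∈ T := (Finset.filter_subset _ _) hcsb
          have hcsU : cs ∈ U := (Finset.filter_subset _ _) hcsT
          have hdisjσ : Disjoint cs.support σ.support := by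
            rw [hU] at hcsU
            exact (Finset.mem_filter.mp hcsU).2
          have hmem := huntouched cs (hbF hcsb) hdisjσ
          have hne : lam L ≠ v := by
            rw [hb] at hcsb
            exact (Finset.mem_filter.mp hcsb).2
          rcases List.mem_cons.mp hmem with heq | htail
          · exact absurd heq hne
          · have := List.rel_of_pairwise_cons hsort htail
            exact lt_of_le_of_ne this hne
        have hML : M < L := by
          by_contra hc
          push_neg at hc
          have := hmono L M hL2 hc hMk
          rw [hMv] at this
          linarith
        -- member of rhoSet
        have hx : max ((L : ℝ) * lam L / lam M)
            (((M : ℝ) - 1) / (M : ℝ) * ((L : ℝ) * lam L / lam M) + 1) ∈ rhoSet k lam := by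
          exact ⟨M, L, hM2, hML, hLk, by rw [hMv]; exact hLv, rfl⟩
        have hxρ := le_rho k lam hpos hone hx
        have hq1 : q ≤ rho k lam * v := by
          have h1 : (L : ℝ) * lam L / lam M ≤ rho k lam :=
            le_trans (le_max_left _ _) hxρ
          rw [hMv] at h1
          calc q = (L : ℝ) * lam L / v * v := by field_simp; exact hq
            _ ≤ rho k lam * v := mul_le_mul_of_nonneg_right h1 (le_of_lt hv)
        have hq2 : ((M : ℝ) - 1) / (M : ℝ) * (q / v) + 1 ≤ rho k lam := by
          have h1 := le_trans (le_max_right _ _) hxρ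
          rw [hMv] at h1
          exact h1
        have hsum_b : ∑ c ∈ b, ((c.support.card : ℝ) * lam (c.support.card))
            ≤ (b.card : ℝ) * q := by
          calc ∑ c ∈ b, ((c.support.card : ℝ) * lam (c.support.card))
              ≤ ∑ _c ∈ b, q := Finset.sum_le_sum (fun c hc => hcsmax c hc)
            _ = (b.card : ℝ) * q := by rw [Finset.sum_const, nsmul_eq_mul]
        have harith := stage_arith (u := ∑ c ∈ a, c.support.card) (t := a.card)
          (D := b.card) (n₁ := n₁) hv hq0
          (by exact_mod_cast hM2) (by exact_mod_cast hu_le)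
          (by
            have h9 : a.card + b.card ≤ n₁ := by omega
            exact_mod_cast h9)
          (by exact_mod_cast hu_Mt) hq1 hq2
        rw [hsum_a]
        linarith
    -- assemble
    rw [show IOrec k lam Wstar (v :: vs) σ = IOrec k lam Wstar vs (σ * π₁) from rfl]
    calc ∑ c ∈ U, ((c.support.card : ℝ) * lam (c.support.card))
        = ∑ c ∈ U₁, ((c.support.card : ℝ) * lam (c.support.card))
          + (∑ c ∈ a, ((c.support.card : ℝ) * lam (c.support.card))
            + ∑ c ∈ b, ((c.support.card : ℝ) * lam (c.support.card))) := by
          rw [hsplit1, hsplit2]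
      _ ≤ rho k lam * (SW lam (IOrec k lam Wstar vs (σ * π₁)) - SW lam (σ * π₁))
          + rho k lam * (v * n₁) := add_le_add hIH hstage
      _ = rho k lam * (SW lam (IOrec k lam Wstar vs (σ * π₁)) - SW lam σ) := by
          rw [hSWσ₁]; ring

end approx

lemma SW_one (lam : ℕ → ℝ) : SW lam (1 : Perm (Fin n)) = 0 := by
  simp [SW, utility]

lemma values_pos (hpos : ∀ ℓ : ℕ, 2 ≤ ℓ → ℓ ≤ k → 0 < lam ℓ) :
    ∀ v ∈ values k lam, 0 < v := by
  intro v hv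
  obtain ⟨ℓ, ⟨h2, hk⟩, hval⟩ := (mem_values k lam).mp hv
  exact hval ▸ hpos ℓ h2 hk

theorem main (k : ℕ) (hk : 3 ≤ k) (lam : ℕ → ℝ)
    (hpos : ∀ ℓ : ℕ, 2 ≤ ℓ → ℓ ≤ k → 0 < lam ℓ)
    (hone : ∀ ℓ : ℕ, 2 ≤ ℓ → ℓ ≤ k → lam ℓ ≤ 1)
    (hmono : ∀ ℓ ℓ' : ℕ, 2 ≤ ℓ → ℓ ≤ ℓ' → ℓ' ≤ k → lam ℓ' ≤ lam ℓ)
    (hnu : ∃ ℓ ℓ' : ℕ, 2 ≤ ℓ ∧ ℓ < ℓ' ∧ ℓ' ≤ k ∧ lam ℓ' < lam ℓ) :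
    ∃ f : (n : ℕ) → (Fin n → Finset (Fin n)) → Equiv.Perm (Fin n),
      (∀ (n : ℕ) (W : Fin n → Finset (Fin n)), (∀ i, i ∉ W i) →
        ∀ i : Fin n, (f n W) i ≠ i → (f n W) i ∈ W i ∧ cycLen (f n W) i ≤ k) ∧
      (∀ (n : ℕ) (Wstar W : Fin n → Finset (Fin n)), (∀ i, i ∉ Wstar i) →
        (∀ j, W j ⊆ Wstar j) → ∀ i : Fin n,
          utility lam (f n W) i ≤ utility lam (f n (Function.update W i (Wstar i))) i) ∧
      (1 ≤ rho k lam ∧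
        ∀ (n : ℕ) (Wstar : Fin n → Finset (Fin n)), (∀ i, i ∉ Wstar i) →
          ∀ π : Equiv.Perm (Fin n),
            (∀ i : Fin n, π i ≠ i → π i ∈ Wstar i ∧ cycLen π i ≤ k) →
            SW lam (f n Wstar) ≥ (1 / rho k lam) * SW lam π) := by
  have hρ1 : 1 ≤ rho k lam := one_le_rho k lam hpos hone hnu
  have hρ0 : 0 < rho k lam := lt_of_lt_of_le one_pos hρ1
  refine ⟨fun n W => IOrec k lam W (values k lam) 1, ?_, ?_, hρ1, ?_⟩
  · -- mechanism property
    intro n W _ i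
    refine IOrec_feasibleInv k lam W (values k lam) 1 ?_ i
    intro j hj
    simp at hj
  · -- truthful
    intro n Wstar W _ hsub i
    refine truth_key k lam ?_ ?_ (values k lam) 1 (values_sorted k lam)
      (values_pos k lam hpos) (by simp)
    · intro j
      by_cases hji : j = i
      · subst hji
        rw [Function.update_self]
        exact hsub j
      · rw [Function.update_of_ne hji]
    · intro j hji
      rw [Function.update_of_ne hji]
  · -- approximation
    intro n Wstar _ π hfeas
    have h1 := approx_rec k lam hpos hone hmono hρ1 hfeas (values k lam) 1
      (values_sorted k lam) (values_nodup k lam)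
      (fun v hv => by
        obtain ⟨ℓ, ⟨h2, hk'⟩, hval⟩ := (mem_values k lam).mp hv
        exact ⟨ℓ, h2, hk', hval⟩)
      (fun c hc _ => (mem_values k lam).mpr
        ⟨c.support.card, ⟨factor_two_le hc, factor_len_le_k k hfeas hc⟩, rfl⟩)
    have hfilter : π.cycleFactorsFinset.filter
        (fun c => Disjoint c.support (1 : Perm (Fin n)).support)
        = π.cycleFactorsFinset := by
      refine Finset.filter_true_of_mem (fun c _ => ?_)
      rw [Equiv.Perm.support_one]
      exact Finset.disjoint_empty_right _
    rw [hfilter, ← SW_eq_sum_cycles, SW_one, sub_zero] at h1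
    rw [ge_iff_le, one_div, inv_mul_le_iff₀ hρ0]
    exact h1

end IOMechanism

/-- Theorem 5 of the paper.  For every length bound `k ≥ 3` and every
non-uniform length function `λ`, there exists a (not necessarily computationally
efficient) truthful `(k,λ)`-BE mechanism with approximation ratio `ρ(λ)`. -/
theorem exists_truthful_mechanism_rho_approx
    (k : ℕ) (hk : 3 ≤ k) (lam : ℕ → ℝ) (hlam : IsLengthFunction k lam)
    (hnu : NonUniform k lam) :
    ∃ f : Mechanism,
      IsMechanism k f ∧ Truthful k lam f ∧ ApproxRatio k lam f (rho k lam) := by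
  obtain ⟨hposone, hmono⟩ := hlam
  obtain ⟨f, h1, h2, h3, h4⟩ := main k hk lam
    (fun ℓ a b => (hposone ℓ a b).1) (fun ℓ a b => (hposone ℓ a b).2) hmono hnu
  exact ⟨f, h1, h2, h3, h4⟩

end

end BarterExchange
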